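/- Continuity of the truncated Wilcoxon functional in the supremum norm: Let tau > 0, and let S_{1,n}, S_{2,n}, S_{1,0}, S_{2,0} : [0, tau] -> [0, 1] be nonincreasing right-continuous functions such that S_{1,0} and S_{2,0} are continuous and sup over [0,tau] of |S_{l,n} - S_{l,0}| -> 0 for l = 1, 2. Then 1 + integral over (0,tau] of Š_{1,n}(t) dS_{2,n}(t) - (1/2) S_{1,n}(tau) S_{2,n}(tau) converges to 1 + integral over (0,tau] of S_{1,0}(t) dS_{2,0}(t) - (1/2) S_{1,0}(tau) S_{2,0}(tau) as n -> infinity, where Š(t) = (S(t) + S(t-))/2. -/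

import Mathlib

open MeasureTheory Filter Set Function Topology


lemma myBiUnionIoc (t : ℕ → ℝ) (ht : Monotone t) (k : ℕ) :
    ⋃ i ∈ Finset.range k, Ioc (t i) (t (i + 1)) = Ioc (t 0) (t k) := by
  induction k with
  | zero => simp
  | succ k ih =>
    rw [Finset.range_add_one]
    simp only [Finset.mem_insert, Set.iUnion_iUnion_eq_or_left]
    rw [ih, Set.union_comm, Ioc_union_Ioc_eq_Ioc (ht (Nat.zero_le k)) (ht (Nat.le_succ k))]

lemma mySupBound {τ : ℝ} (hτ : 0 < τ) (f g : ℝ → ℝ)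
    (hf : ∀ t ∈ Icc 0 τ, f t ∈ Icc (0:ℝ) 1) (hg : ∀ t ∈ Icc 0 τ, g t ∈ Icc (0:ℝ) 1)
    {t : ℝ} (htm : t ∈ Icc 0 τ) :
    |f t - g t| ≤ ⨆ s : Icc (0:ℝ) τ, |f s - g s| := by
  have hbdd : BddAbove (Set.range fun s : Icc (0:ℝ) τ => |f s - g s|) := by
    refine ⟨1, ?_⟩
    rintro x ⟨⟨s, hs⟩, rfl⟩
    have h1 := hf s hs; have h2 := hg s hs
    rw [abs_sub_le_iff]
    constructor <;> simp only [Set.mem_Icc] at h1 h2 <;> linarith [h1.1, h1.2, h2.1, h2.2]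
  exact le_ciSup hbdd (⟨t, htm⟩ : Icc (0:ℝ) τ)

lemma myWeakConv (τ : ℝ) (hτ : 0 < τ)
    (G : ℝ → ℝ) (hGcont : Continuous G) (hGbdd : ∀ t, |G t| ≤ 1)
    (S : ℕ → ℝ → ℝ) (S0 : ℝ → ℝ)
    (hSrange : ∀ n, ∀ t ∈ Icc 0 τ, S n t ∈ Icc (0:ℝ) 1)
    (hS0range : ∀ t ∈ Icc 0 τ, S0 t ∈ Icc (0:ℝ) 1)
    (hmono : ∀ n, AntitoneOn (S n) (Icc 0 τ)) (hmono0 : AntitoneOn S0 (Icc 0 τ))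
    (hconv : Tendsto (fun n => ⨆ t : Icc (0:ℝ) τ, |S n t - S0 t|) atTop (𝓝 0))
    (μ : ℕ → Measure ℝ) (μ0 : Measure ℝ)
    (hμ : ∀ n, ∀ a b : ℝ, a ∈ Icc 0 τ → b ∈ Icc 0 τ → a ≤ b →
      μ n (Ioc a b) = ENNReal.ofReal (S n a - S n b))
    (hμ0 : ∀ a b : ℝ, a ∈ Icc 0 τ → b ∈ Icc 0 τ → a ≤ b →
      μ0 (Ioc a b) = ENNReal.ofReal (S0 a - S0 b)) :
    Tendsto (fun n => ∫ u in Ioc (0:ℝ) τ, G u ∂(μ n)) atTop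
      (𝓝 (∫ u in Ioc (0:ℝ) τ, G u ∂μ0)) := by
  rw [Metric.tendsto_atTop]
  intro ε hε
  -- uniform continuity of G on [0, τ]
  obtain ⟨δ, hδ, hucG⟩ := Metric.uniformContinuousOn_iff.1
    (isCompact_Icc.uniformContinuousOn_of_continuous (hGcont.continuousOn (s := Icc 0 τ)))
    (ε/4) (by positivity)
  obtain ⟨k, hk⟩ := exists_nat_gt (τ/δ)
  have hk0 : (0:ℝ) < k := lt_of_le_of_lt (by positivity) hk
  have hkne : (k:ℝ) ≠ 0 := ne_of_gt hk0
  have hmesh : τ/k < δ := by rw [div_lt_iff₀ hk0]; rw [div_lt_iff₀ hδ] at hk; linarith [hk]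
  set t : ℕ → ℝ := fun i => i * (τ/k) with htdef
  have ht0 : t 0 = 0 := by simp [htdef]
  have htk : t k = τ := by show (k:ℝ) * (τ / k) = τ; field_simp
  have htmono : Monotone t := fun a b hab => by
    have : (a:ℝ) ≤ b := Nat.cast_le.2 hab
    have hτk : 0 ≤ τ/k := by positivity
    exact mul_le_mul_of_nonneg_right this hτk
  have htmem : ∀ i ≤ k, t i ∈ Icc (0:ℝ) τ := fun i hi => by
    constructor
    · have : 0 ≤ τ/k := by positivity
      positivity
    · calc t i ≤ t k := htmono hi
        _ = τ := htk
  have htdiff : ∀ i : ℕ, t (i+1) - t i = τ/k := fun i => by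
    simp only [htdef]; push_cast; ring
  -- key approximation estimate, uniform over measures with the Stieltjes property
  have key : ∀ (ν : Measure ℝ) (S' : ℝ → ℝ),
      (∀ u ∈ Icc 0 τ, S' u ∈ Icc (0:ℝ) 1) → AntitoneOn S' (Icc 0 τ) →
      (∀ a b : ℝ, a ∈ Icc 0 τ → b ∈ Icc 0 τ → a ≤ b →
        ν (Ioc a b) = ENNReal.ofReal (S' a - S' b)) →
      |(∫ u in Ioc (0:ℝ) τ, G u ∂ν) -
        ∑ i ∈ Finset.range k, G (t (i+1)) * (S' (t i) - S' (t (i+1)))| ≤ ε/4 := by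
    intro ν S' hr hm hν
    have hmassfin : ∀ i < k, ν (Ioc (t i) (t (i+1))) < ⊤ := by
      intro i hik
      rw [hν (t i) (t (i+1)) (htmem i hik.le) (htmem (i+1) hik)
        (htmono (Nat.le_succ i))]
      exact ENNReal.ofReal_lt_top
    have hmassR : ∀ i < k, (ν (Ioc (t i) (t (i+1)))).toReal = S' (t i) - S' (t (i+1)) := by
      intro i hik
      rw [hν (t i) (t (i+1)) (htmem i hik.le) (htmem (i+1) hik) (htmono (Nat.le_succ i)),
        ENNReal.toReal_ofReal]
      exact sub_nonneg.2 (hm (htmem i hik.le) (htmem (i+1) hik) (htmono (Nat.le_succ i)))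
    have hint : ∀ i < k, IntegrableOn G (Ioc (t i) (t (i+1))) ν := by
      intro i hik
      haveI : IsFiniteMeasure (ν.restrict (Ioc (t i) (t (i+1)))) :=
        ⟨by rw [Measure.restrict_apply_univ]; exact hmassfin i hik⟩
      exact ⟨hGcont.aestronglyMeasurable.restrict,
        HasFiniteIntegral.of_bounded (C := 1)
          (Eventually.of_forall fun u => by rw [Real.norm_eq_abs]; exact hGbdd u)⟩
    have hsplit : (∫ u in Ioc (0:ℝ) τ, G u ∂ν)
        = ∑ i ∈ Finset.range k, ∫ u in Ioc (t i) (t (i+1)), G u ∂ν := by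
      rw [show Ioc (0:ℝ) τ = Ioc (t 0) (t k) by rw [ht0, htk],
        ← myBiUnionIoc t htmono k,
        integral_biUnion_finset _ (fun i _ => measurableSet_Ioc) ?_
          (fun i hi => hint i (Finset.mem_range.1 hi))]
      · intro i hi j hj hij
        simp only [Finset.coe_sort_coe, onFun]
        rcases lt_or_gt_of_ne hij with h | h
        · exact Set.Ioc_disjoint_Ioc.2
            (le_trans (min_le_left _ _) (le_trans (htmono h) (le_max_right _ _)))
        · exact Set.Ioc_disjoint_Ioc.2
            (le_trans (min_le_right _ _) (le_trans (htmono h) (le_max_left _ _)))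
    have hpiece : ∀ i < k,
        |(∫ u in Ioc (t i) (t (i+1)), G u ∂ν) - G (t (i+1)) * (S' (t i) - S' (t (i+1)))|
          ≤ ε/4 * (S' (t i) - S' (t (i+1))) := by
      intro i hik
      have hconst : (∫ u in Ioc (t i) (t (i+1)), G (t (i+1)) ∂ν)
          = G (t (i+1)) * (S' (t i) - S' (t (i+1))) := by
        rw [setIntegral_const, measureReal_def, hmassR i hik, smul_eq_mul, mul_comm]
      rw [← hconst, ← integral_sub (hint i hik) (integrableOn_const (hmassfin i hik).ne)]
      have hbd : ∀ u ∈ Ioc (t i) (t (i+1)), ‖G u - G (t (i+1))‖ ≤ ε/4 := by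
        intro u hu
        have humem : u ∈ Icc (0:ℝ) τ :=
          ⟨le_trans (htmem i hik.le).1 hu.1.le, le_trans hu.2 (htmem (i+1) hik).2⟩
        have hdist : dist u (t (i+1)) < δ := by
          rw [Real.dist_eq, abs_sub_lt_iff]
          constructor
          · linarith [hu.2, hδ]
          · have := hu.1
            have := htdiff i
            linarith [hmesh]
        rw [Real.norm_eq_abs, ← Real.dist_eq]
        exact le_of_lt (hucG u humem (t (i+1)) (htmem (i+1) hik) hdist)
      calc ‖∫ u in Ioc (t i) (t (i+1)), (G u - G (t (i+1))) ∂ν‖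
          ≤ ε/4 * (ν (Ioc (t i) (t (i+1)))).toReal :=
            norm_setIntegral_le_of_norm_le_const (hmassfin i hik) hbd
        _ = ε/4 * (S' (t i) - S' (t (i+1))) := by rw [hmassR i hik]
    calc |(∫ u in Ioc (0:ℝ) τ, G u ∂ν) -
        ∑ i ∈ Finset.range k, G (t (i+1)) * (S' (t i) - S' (t (i+1)))|
        = |∑ i ∈ Finset.range k, ((∫ u in Ioc (t i) (t (i+1)), G u ∂ν)
            - G (t (i+1)) * (S' (t i) - S' (t (i+1))))| := by
          rw [hsplit, Finset.sum_sub_distrib]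
      _ ≤ ∑ i ∈ Finset.range k, |(∫ u in Ioc (t i) (t (i+1)), G u ∂ν)
            - G (t (i+1)) * (S' (t i) - S' (t (i+1)))| := Finset.abs_sum_le_sum_abs _ _
      _ ≤ ∑ i ∈ Finset.range k, ε/4 * (S' (t i) - S' (t (i+1))) :=
          Finset.sum_le_sum (fun i hi => hpiece i (Finset.mem_range.1 hi))
      _ = ε/4 * (S' (t 0) - S' (t k)) := by
          rw [← Finset.mul_sum, Finset.sum_range_sub' (fun i => S' (t i))]
      _ ≤ ε/4 := by
          rw [ht0, htk]
          have h0 := hr 0 (left_mem_Icc.2 hτ.le)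
          have hτ' := hr τ (right_mem_Icc.2 hτ.le)
          nlinarith [h0.2, hτ'.1]
  -- now compare the Riemann sums
  have hev : ∀ᶠ n in atTop,
      (⨆ s : Icc (0:ℝ) τ, |S n s - S0 s|) < ε/(8*(k+1)) :=
    hconv.eventually (gt_mem_nhds (by positivity))
  obtain ⟨N, hN⟩ := eventually_atTop.1 hev
  refine ⟨N, fun n hn => ?_⟩
  have hεn := hN n hn
  have hsumdiff : |(∑ i ∈ Finset.range k, G (t (i+1)) * (S n (t i) - S n (t (i+1))))
      - ∑ i ∈ Finset.range k, G (t (i+1)) * (S0 (t i) - S0 (t (i+1)))| < ε/4 := by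
    rw [← Finset.sum_sub_distrib]
    calc |∑ i ∈ Finset.range k, (G (t (i+1)) * (S n (t i) - S n (t (i+1)))
          - G (t (i+1)) * (S0 (t i) - S0 (t (i+1))))|
        ≤ ∑ i ∈ Finset.range k, |G (t (i+1)) * (S n (t i) - S n (t (i+1)))
          - G (t (i+1)) * (S0 (t i) - S0 (t (i+1)))| := Finset.abs_sum_le_sum_abs _ _
      _ ≤ ∑ i ∈ Finset.range k, (2 * (ε/(8*(k+1)))) := by
          apply Finset.sum_le_sum
          intro i hi
          have hik := Finset.mem_range.1 hi
          have h1 : |S n (t i) - S0 (t i)| ≤ ⨆ s : Icc (0:ℝ) τ, |S n s - S0 s| :=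
            mySupBound hτ (S n) S0 (hSrange n) hS0range (htmem i hik.le)
          have h2 : |S n (t (i+1)) - S0 (t (i+1))| ≤ ⨆ s : Icc (0:ℝ) τ, |S n s - S0 s| :=
            mySupBound hτ (S n) S0 (hSrange n) hS0range (htmem (i+1) hik)
          have hGb := hGbdd (t (i+1))
          calc |G (t (i+1)) * (S n (t i) - S n (t (i+1)))
              - G (t (i+1)) * (S0 (t i) - S0 (t (i+1)))|
              = |G (t (i+1))| * |(S n (t i) - S0 (t i)) - (S n (t (i+1)) - S0 (t (i+1)))| := by
                rw [← abs_mul]; ring_nf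
            _ ≤ 1 * |(S n (t i) - S0 (t i)) - (S n (t (i+1)) - S0 (t (i+1)))| := by
                apply mul_le_mul_of_nonneg_right hGb (abs_nonneg _)
            _ ≤ 2 * (ε/(8*(k+1))) := by
                rw [one_mul]
                calc |(S n (t i) - S0 (t i)) - (S n (t (i+1)) - S0 (t (i+1)))|
                    ≤ |S n (t i) - S0 (t i)| + |S n (t (i+1)) - S0 (t (i+1))| := abs_sub _ _
                  _ ≤ 2 * (ε/(8*(k+1))) := by linarith [le_of_lt hεn]
      _ = k * (2 * (ε/(8*(k+1)))) := by rw [Finset.sum_const, Finset.card_range]; ring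
      _ < ε/4 := by
          rw [show (k:ℝ) * (2 * (ε/(8*((k:ℝ)+1)))) = ε * ((k:ℝ)/(4*((k:ℝ)+1))) by
            field_simp; ring]
          have hlt : (k:ℝ)/(4*((k:ℝ)+1)) < 1/4 := by
            rw [div_lt_div_iff₀ (by positivity) (by norm_num)]
            linarith
          calc ε * ((k:ℝ)/(4*((k:ℝ)+1))) < ε * (1/4) := mul_lt_mul_of_pos_left hlt hε
            _ = ε/4 := by ring
  have hA := key (μ n) (S n) (hSrange n) (hmono n) (hμ n)
  have hA0 := key μ0 S0 hS0range hmono0 hμ0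
  rw [Real.dist_eq]
  have : |(∫ u in Ioc (0:ℝ) τ, G u ∂(μ n)) - ∫ u in Ioc (0:ℝ) τ, G u ∂μ0|
      ≤ |(∫ u in Ioc (0:ℝ) τ, G u ∂(μ n)) -
          ∑ i ∈ Finset.range k, G (t (i+1)) * (S n (t i) - S n (t (i+1)))|
        + |(∑ i ∈ Finset.range k, G (t (i+1)) * (S n (t i) - S n (t (i+1))))
          - ∑ i ∈ Finset.range k, G (t (i+1)) * (S0 (t i) - S0 (t (i+1)))|
        + |(∑ i ∈ Finset.range k, G (t (i+1)) * (S0 (t i) - S0 (t (i+1))))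
          - ∫ u in Ioc (0:ℝ) τ, G u ∂μ0| := by
    have := abs_sub_le (∫ u in Ioc (0:ℝ) τ, G u ∂(μ n))
      (∑ i ∈ Finset.range k, G (t (i+1)) * (S0 (t i) - S0 (t (i+1))))
      (∫ u in Ioc (0:ℝ) τ, G u ∂μ0)
    have h2 := abs_sub_le (∫ u in Ioc (0:ℝ) τ, G u ∂(μ n))
      (∑ i ∈ Finset.range k, G (t (i+1)) * (S n (t i) - S n (t (i+1))))
      (∑ i ∈ Finset.range k, G (t (i+1)) * (S0 (t i) - S0 (t (i+1))))
    linarith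
  rw [abs_sub_comm] at hA0
  linarith

/-- **Continuity of the truncated Wilcoxon functional in the supremum norm.**
`S₁ n, S₂ n, S₁₀, S₂₀ : [0,τ] → [0,1]` are nonincreasing right-continuous, `S₁₀` and `S₂₀`
continuous, with `sup_{[0,τ]} |Sₗ n - Sₗ₀| → 0` for `l = 1,2`.  `μ₂ n` (resp. `μ₂₀`) is the
nonnegative Lebesgue–Stieltjes measure generated by `S₂ n` (resp. `S₂₀`), so `∫ f dS₂ = -∫ f ∂μ₂`.
Writing `Š(t) = (S(t) + S(t-))/2`, the truncated Wilcoxon functional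
`1 + ∫_{(0,τ]} Š₁ₙ dS₂ₙ - (1/2) S₁ₙ(τ) S₂ₙ(τ)` converges to
`1 + ∫_{(0,τ]} S₁₀ dS₂₀ - (1/2) S₁₀(τ) S₂₀(τ)`. -/
theorem truncated_wilcoxon_functional_continuity
    (τ : ℝ) (hτ : 0 < τ)
    (S₁ S₂ : ℕ → ℝ → ℝ) (S₁₀ S₂₀ : ℝ → ℝ)
    (hS₁mono : ∀ n, AntitoneOn (S₁ n) (Set.Icc 0 τ))
    (hS₂mono : ∀ n, AntitoneOn (S₂ n) (Set.Icc 0 τ))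
    (hS₁rc : ∀ n, ∀ t ∈ Set.Ico 0 τ, ContinuousWithinAt (S₁ n) (Set.Ici t) t)
    (hS₂rc : ∀ n, ∀ t ∈ Set.Ico 0 τ, ContinuousWithinAt (S₂ n) (Set.Ici t) t)
    (hS₁range : ∀ n, ∀ t ∈ Set.Icc 0 τ, S₁ n t ∈ Set.Icc (0 : ℝ) 1)
    (hS₂range : ∀ n, ∀ t ∈ Set.Icc 0 τ, S₂ n t ∈ Set.Icc (0 : ℝ) 1)
    (hS₁₀mono : AntitoneOn S₁₀ (Set.Icc 0 τ)) (hS₂₀mono : AntitoneOn S₂₀ (Set.Icc 0 τ))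
    (hS₁₀range : ∀ t ∈ Set.Icc 0 τ, S₁₀ t ∈ Set.Icc (0 : ℝ) 1)
    (hS₂₀range : ∀ t ∈ Set.Icc 0 τ, S₂₀ t ∈ Set.Icc (0 : ℝ) 1)
    (hS₁₀cont : ContinuousOn S₁₀ (Set.Icc 0 τ)) (hS₂₀cont : ContinuousOn S₂₀ (Set.Icc 0 τ))
    (hS₁conv : Tendsto (fun n => ⨆ t : Set.Icc (0 : ℝ) τ, |S₁ n t - S₁₀ t|) atTop (𝓝 0))
    (hS₂conv : Tendsto (fun n => ⨆ t : Set.Icc (0 : ℝ) τ, |S₂ n t - S₂₀ t|) atTop (𝓝 0))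
    (μ₂ : ℕ → Measure ℝ) (μ₂₀ : Measure ℝ)
    (hμ₂ : ∀ n, ∀ a b : ℝ, a ∈ Set.Icc 0 τ → b ∈ Set.Icc 0 τ → a ≤ b →
      μ₂ n (Set.Ioc a b) = ENNReal.ofReal (S₂ n a - S₂ n b))
    (hμ₂₀ : ∀ a b : ℝ, a ∈ Set.Icc 0 τ → b ∈ Set.Icc 0 τ → a ≤ b →
      μ₂₀ (Set.Ioc a b) = ENNReal.ofReal (S₂₀ a - S₂₀ b)) :
    Tendsto
      (fun n => 1 + -∫ t in Set.Ioc (0 : ℝ) τ,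
            (S₁ n t + Function.leftLim (S₁ n) t) / 2 ∂(μ₂ n)
          - (1 / 2) * S₁ n τ * S₂ n τ) atTop
      (𝓝 (1 + -∫ t in Set.Ioc (0 : ℝ) τ, S₁₀ t ∂μ₂₀ - (1 / 2) * S₁₀ τ * S₂₀ τ)) := by
  have h0mem : (0:ℝ) ∈ Icc 0 τ := left_mem_Icc.2 hτ.le
  have hτmem : τ ∈ Icc (0:ℝ) τ := right_mem_Icc.2 hτ.le
  -- projection onto [0, τ]
  set proj : ℝ → ℝ := fun u => max 0 (min u τ) with hprojdef
  have hprojmem : ∀ u, proj u ∈ Icc (0:ℝ) τ := fun u =>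
    ⟨le_max_left _ _, max_le hτ.le (min_le_right _ _)⟩
  have hprojeq : ∀ u ∈ Icc (0:ℝ) τ, proj u = u := fun u hu => by
    simp only [hprojdef]
    rw [min_eq_left hu.2, max_eq_right hu.1]
  have hprojmono : Monotone proj := fun a b hab =>
    max_le_max le_rfl (min_le_min_right _ hab)
  have hprojcont : Continuous proj :=
    continuous_const.max (continuous_id.min continuous_const)
  -- extended functions
  set G : ℝ → ℝ := fun u => S₁₀ (proj u) with hGdef
  have hGcont : Continuous G := hS₁₀cont.comp_continuous hprojcont hprojmem
  have hGbdd : ∀ u, |G u| ≤ 1 := fun u => by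
    have := hS₁₀range (proj u) (hprojmem u)
    rw [abs_le]; exact ⟨by linarith [this.1], this.2⟩
  set g : ℕ → ℝ → ℝ := fun n u => S₁ n (proj u) with hgdef
  have hgant : ∀ n, Antitone (g n) := fun n a b hab =>
    hS₁mono n (hprojmem a) (hprojmem b) (hprojmono hab)
  have hgrange : ∀ n u, g n u ∈ Icc (0:ℝ) 1 := fun n u => hS₁range n _ (hprojmem u)
  have hllrange : ∀ n u, Function.leftLim (g n) u ∈ Icc (0:ℝ) 1 := by
    intro n u
    constructor
    · exact le_trans (hgrange n u).1 ((hgant n).le_leftLim le_rfl)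
    · exact le_trans ((hgant n).leftLim_le (show u - 1 < u by linarith)) (hgrange n (u-1)).2
  set gg : ℕ → ℝ → ℝ := fun n u => (g n u + Function.leftLim (g n) u) / 2 with hggdef
  have hggrange : ∀ n u, gg n u ∈ Icc (0:ℝ) 1 := by
    intro n u
    have h1 := hgrange n u; have h2 := hllrange n u
    constructor
    · simp only [hggdef]; linarith [h1.1, h2.1]
    · simp only [hggdef]; linarith [h1.2, h2.2]
  -- measurability
  have hggmeas : ∀ n, Measurable (gg n) := fun n =>
    (((hgant n).measurable).add ((hgant n).leftLim.measurable)).div_const 2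
  -- finiteness of restricted measures
  have hfin : ∀ n, μ₂ n (Ioc (0:ℝ) τ) < ⊤ := fun n => by
    rw [hμ₂ n 0 τ h0mem hτmem hτ.le]; exact ENNReal.ofReal_lt_top
  have hfinI : ∀ n, IsFiniteMeasure ((μ₂ n).restrict (Ioc (0:ℝ) τ)) := fun n =>
    ⟨by rw [Measure.restrict_apply_univ]; exact hfin n⟩
  -- integrability
  have hintG : ∀ n, IntegrableOn G (Ioc (0:ℝ) τ) (μ₂ n) := by
    intro n
    haveI := hfinI n
    exact ⟨hGcont.aestronglyMeasurable.restrict,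
      HasFiniteIntegral.of_bounded (C := 1)
        (Eventually.of_forall fun u => by rw [Real.norm_eq_abs]; exact hGbdd u)⟩
  have hintg : ∀ n, IntegrableOn (gg n) (Ioc (0:ℝ) τ) (μ₂ n) := by
    intro n
    haveI := hfinI n
    refine ⟨((hggmeas n).aestronglyMeasurable).restrict,
      HasFiniteIntegral.of_bounded (C := 1) (Eventually.of_forall fun u => ?_)⟩
    have := hggrange n u
    rw [Real.norm_eq_abs, abs_le]
    exact ⟨by linarith [this.1], this.2⟩
  -- leftLim agreement on (0, τ]
  have hLLeq : ∀ n, ∀ u ∈ Ioc (0:ℝ) τ, Function.leftLim (S₁ n) u = Function.leftLim (g n) u := by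
    intro n u hu
    have hne : (𝓝[<] u) ≠ ⊥ := (nhdsLT_neBot u).ne
    have hev : g n =ᶠ[𝓝[<] u] S₁ n := by
      filter_upwards [Ioo_mem_nhdsLT hu.1] with s hs
      simp only [hgdef]
      rw [hprojeq s ⟨hs.1.le, hs.2.le.trans hu.2⟩]
    exact leftLim_eq_of_tendsto (Tendsto.congr' hev ((hgant n).tendsto_leftLim u))
  -- the integrals coincide with those of the extended functions
  have hcongr : ∀ n, (∫ u in Ioc (0:ℝ) τ, (S₁ n u + Function.leftLim (S₁ n) u) / 2 ∂(μ₂ n))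
      = ∫ u in Ioc (0:ℝ) τ, gg n u ∂(μ₂ n) := by
    intro n
    apply setIntegral_congr_fun measurableSet_Ioc
    intro u hu
    simp only [hggdef, hgdef]
    rw [hLLeq n u hu, hprojeq u ⟨hu.1.le, hu.2⟩]
  have hcongr0 : (∫ u in Ioc (0:ℝ) τ, S₁₀ u ∂μ₂₀) = ∫ u in Ioc (0:ℝ) τ, G u ∂μ₂₀ := by
    apply setIntegral_congr_fun measurableSet_Ioc
    intro u hu
    simp only [hGdef]
    rw [hprojeq u ⟨hu.1.le, hu.2⟩]
  -- uniform bound on gg - G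
  have hdiffb : ∀ n u, |gg n u - G u| ≤ ⨆ s : Icc (0:ℝ) τ, |S₁ n s - S₁₀ s| := by
    intro n u
    have h1 : |g n u - G u| ≤ ⨆ s : Icc (0:ℝ) τ, |S₁ n s - S₁₀ s| :=
      mySupBound hτ (S₁ n) S₁₀ (hS₁range n) hS₁₀range (hprojmem u)
    have h2 : |Function.leftLim (g n) u - G u| ≤ ⨆ s : Icc (0:ℝ) τ, |S₁ n s - S₁₀ s| := by
      have hT : Tendsto (fun s => |g n s - G s|) (𝓝[<] u)
          (𝓝 |Function.leftLim (g n) u - G u|) :=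
        (((hgant n).tendsto_leftLim u).sub ((hGcont.tendsto u).mono_left nhdsWithin_le_nhds)).abs
      exact le_of_tendsto hT (Eventually.of_forall fun s =>
        mySupBound hτ (S₁ n) S₁₀ (hS₁range n) hS₁₀range (hprojmem s))
    have heq : gg n u - G u = ((g n u - G u) + (Function.leftLim (g n) u - G u)) / 2 := by
      simp only [hggdef]; ring
    rw [heq, abs_div, abs_two]
    have := abs_add_le (g n u - G u) (Function.leftLim (g n) u - G u)
    linarith
  -- the perturbation term tends to 0
  have hmass1 : ∀ n, (μ₂ n (Ioc (0:ℝ) τ)).toReal ≤ 1 := by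
    intro n
    rw [hμ₂ n 0 τ h0mem hτmem hτ.le, ENNReal.toReal_ofReal
      (sub_nonneg.2 (hS₂mono n h0mem hτmem hτ.le))]
    have h0 := hS₂range n 0 h0mem
    have hτ' := hS₂range n τ hτmem
    linarith [h0.2, hτ'.1]
  have he1nn : ∀ n, 0 ≤ ⨆ s : Icc (0:ℝ) τ, |S₁ n s - S₁₀ s| := fun n =>
    le_trans (abs_nonneg _) (mySupBound hτ (S₁ n) S₁₀ (hS₁range n) hS₁₀range hτmem)
  have hdiff0 : Tendsto (fun n => ∫ u in Ioc (0:ℝ) τ, (gg n u - G u) ∂(μ₂ n)) atTop (𝓝 0) := by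
    refine squeeze_zero_norm (fun n => ?_) hS₁conv
    calc ‖∫ u in Ioc (0:ℝ) τ, (gg n u - G u) ∂(μ₂ n)‖
        ≤ (⨆ s : Icc (0:ℝ) τ, |S₁ n s - S₁₀ s|) * (μ₂ n (Ioc (0:ℝ) τ)).toReal :=
          norm_setIntegral_le_of_norm_le_const (hfin n)
            (fun u _ => by rw [Real.norm_eq_abs]; exact hdiffb n u)
      _ ≤ ⨆ s : Icc (0:ℝ) τ, |S₁ n s - S₁₀ s| :=
          mul_le_of_le_one_right (he1nn n) (hmass1 n)
  -- weak convergence of ∫ G dμ₂ₙ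
  have hweak := myWeakConv τ hτ G hGcont hGbdd S₂ S₂₀ hS₂range hS₂₀range hS₂mono hS₂₀mono
    hS₂conv μ₂ μ₂₀ hμ₂ hμ₂₀
  -- combine
  have hsum : ∀ n, (∫ u in Ioc (0:ℝ) τ, (gg n u - G u) ∂(μ₂ n))
      + (∫ u in Ioc (0:ℝ) τ, G u ∂(μ₂ n)) = ∫ u in Ioc (0:ℝ) τ, gg n u ∂(μ₂ n) := by
    intro n
    have hd : IntegrableOn (fun u => gg n u - G u) (Ioc (0:ℝ) τ) (μ₂ n) :=
      (hintg n).sub (hintG n)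
    rw [← integral_add hd (hintG n)]
    simp
  have htot' : Tendsto (fun n => ∫ u in Ioc (0:ℝ) τ, gg n u ∂(μ₂ n)) atTop
      (𝓝 (∫ u in Ioc (0:ℝ) τ, G u ∂μ₂₀)) := by
    have := hdiff0.add hweak
    rw [zero_add] at this
    exact this.congr hsum
  have htot : Tendsto (fun n => ∫ u in Ioc (0:ℝ) τ,
      (S₁ n u + Function.leftLim (S₁ n) u) / 2 ∂(μ₂ n)) atTop
      (𝓝 (∫ u in Ioc (0:ℝ) τ, S₁₀ u ∂μ₂₀)) := by
    rw [hcongr0]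
    exact htot'.congr (fun n => (hcongr n).symm)
  -- convergence at the endpoint τ
  have hend : ∀ (T : ℕ → ℝ → ℝ) (T0 : ℝ → ℝ),
      (∀ n, ∀ u ∈ Icc (0:ℝ) τ, T n u ∈ Icc (0:ℝ) 1) →
      (∀ u ∈ Icc (0:ℝ) τ, T0 u ∈ Icc (0:ℝ) 1) →
      Tendsto (fun n => ⨆ s : Icc (0:ℝ) τ, |T n s - T0 s|) atTop (𝓝 0) →
      Tendsto (fun n => T n τ) atTop (𝓝 (T0 τ)) := by
    intro T T0 hr hr0 hc
    have h := squeeze_zero_norm (f := fun n => T n τ - T0 τ)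
      (fun n => by rw [Real.norm_eq_abs]; exact mySupBound hτ (T n) T0 (hr n) hr0 hτmem) hc
    have := h.add_const (T0 τ)
    simpa using this
  have h2 := hend S₁ S₁₀ hS₁range hS₁₀range hS₁conv
  have h3 := hend S₂ S₂₀ hS₂range hS₂₀range hS₂conv
  exact (tendsto_const_nhds.add htot.neg).sub ((h2.const_mul (1/2 : ℝ)).mul h3)
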